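/- Let k ≥ 3 and n ≥ 1. A U-cycle for the set of injective words of length n over a k-letter alphabet (one-to-one functions from Fin n to Fin k, i.e., n-letter words in which no letter repeats) exists if and only if k > n. -/

import Mathlib

set_option linter.unusedSectionVars false

section Euler
variable {α V : Type*} [Fintype α] [DecidableEq α] [DecidableEq V] (t h : α → V)

lemma trail_count : ∀ (L : List α), L.Chain' (fun a b => h a = t b) → ∀ (hne : L ≠ []) (v : V),
    L.countP (fun a => decide (h a = v)) + (if t (L.head hne) = v then 1 else 0)
    = L.countP (fun a => decide (t a = v)) + (if h (L.getLast hne) = v then 1 else 0)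
  | [] => by simp
  | [a] => by
      intro _ hne v
      simp only [List.countP_singleton, List.head_cons, List.getLast_singleton,
        decide_eq_true_eq]
      by_cases h1 : h a = v <;> by_cases h2 : t a = v <;> simp [h1, h2]
  | a :: b :: L => by
      intro hc hne v
      have hab : h a = t b := hc.rel_head
      have htail : (b :: L).Chain' (fun a b => h a = t b) := hc.tail
      have ih := trail_count (b :: L) htail (by simp) v
      simp only [List.countP_cons, List.head_cons, decide_eq_true_eq] at *
      rw [List.getLast_cons (by simp : b :: L ≠ [])]
      rw [hab] at *
      grind

lemma countP_eq_card (P : List α) (hnd : P.Nodup) (p : α → Bool) :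
    P.countP p = (P.toFinset.filter (fun a => p a = true)).card := by
  rw [← List.toFinset_filter, List.card_toFinset, List.dedup_eq_self.2 (hnd.filter p),
    List.countP_eq_length_filter]

lemma closed_count (T : List α) (hch : T.Chain' (fun a b => h a = t b))
    (hcl : ∀ x ∈ T.head?, ∀ y ∈ T.getLast?, h y = t x) (v : V) :
    T.countP (fun a => decide (h a = v)) = T.countP (fun a => decide (t a = v)) := by
  rcases T with _ | ⟨x, T⟩
  · rfl
  · have hne : x :: T ≠ [] := by simp
    have := trail_count t h (x :: T) hch hne v
    have hcl' : h ((x :: T).getLast hne) = t ((x :: T).head hne) := by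
      apply hcl
      · simp
      · exact List.getLast_mem_getLast? _ -- may not exist, fix below
    rw [hcl'] at this
    omega

set_option linter.unusedSectionVars false

lemma grow (S : Finset α)
    (hbal : ∀ v, (S.filter fun a => t a = v).card = (S.filter fun a => h a = v).card)
    (v₀ : V) :
    ∀ (fuel : ℕ) (P : List α) (hne : P ≠ []), P.Nodup → P.Chain' (fun a b => h a = t b) →
      (∀ a ∈ P, a ∈ S) → t (P.head hne) = v₀ → S.card ≤ P.length + fuel →
      ∃ (C : List α) (hC : C ≠ []), C.Nodup ∧ C.Chain' (fun a b => h a = t b) ∧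
        (∀ a ∈ C, a ∈ S) ∧ t (C.head hC) = v₀ ∧ h (C.getLast hC) = v₀ := by
  intro fuel
  induction fuel with
  | zero =>
      intro P hne hnd hch hsub hhead hcard
      by_cases hex : ∃ b ∈ S, b ∉ P ∧ t b = h (P.getLast hne)
      · exfalso
        obtain ⟨b, hbS, hbP, -⟩ := hex
        have h1 : P.toFinset ⊆ S.erase b := by
          intro a ha
          simp only [List.mem_toFinset] at ha
          exact Finset.mem_erase.2 ⟨fun hab => hbP (hab ▸ ha), hsub a ha⟩
        have h2 : P.toFinset.card ≤ (S.erase b).card := Finset.card_le_card h1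
        rw [List.card_toFinset, List.dedup_eq_self.2 hnd] at h2
        have h3 : (S.erase b).card < S.card := Finset.card_erase_lt_of_mem hbS
        omega
      · -- maximal: P is closed
        refine ⟨P, hne, hnd, hch, hsub, hhead, ?_⟩
        by_contra hu
        push_neg at hex
        have hcount := trail_count t h P hch hne (h (P.getLast hne))
        rw [hhead, if_neg (fun hh : v₀ = h (P.getLast hne) => hu hh.symm), if_pos rfl] at hcount
        set u := h (P.getLast hne) with hudef
        -- countP_h u = countP_t u + 1
        have e1 : P.countP (fun a => decide (t a = u)) =
            (P.toFinset.filter (fun a => t a = u)).card := by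
          rw [countP_eq_card _ hnd]; simp
        have e2 : P.countP (fun a => decide (h a = u)) =
            (P.toFinset.filter (fun a => h a = u)).card := by
          rw [countP_eq_card _ hnd]; simp
        have s1 : S.filter (fun a => t a = u) ⊆ P.toFinset.filter (fun a => t a = u) := by
          intro a ha
          simp only [Finset.mem_filter] at ha ⊢
          refine ⟨List.mem_toFinset.2 ?_, ha.2⟩
          by_contra hnotP
          exact hex a ha.1 hnotP ha.2
        have s2 : P.toFinset.filter (fun a => h a = u) ⊆ S.filter (fun a => h a = u) := by
          intro a ha
          simp only [Finset.mem_filter, List.mem_toFinset] at ha ⊢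
          exact ⟨hsub a ha.1, ha.2⟩
        have c1 := Finset.card_le_card s1
        have c2 := Finset.card_le_card s2
        have hb2 := hbal u
        rw [e1, e2] at hcount
        omega
  | succ m ih =>
      intro P hne hnd hch hsub hhead hcard
      by_cases hex : ∃ b ∈ S, b ∉ P ∧ t b = h (P.getLast hne)
      · obtain ⟨b, hbS, hbP, hb⟩ := hex
        have hne' : P ++ [b] ≠ [] := by simp
        have hnd' : (P ++ [b]).Nodup := by
          rw [List.nodup_append]
          exact ⟨hnd, List.nodup_singleton b, by intro a ha c hc hac; simp at hc; subst hc; subst hac; exact hbP ha⟩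
        have hch' : (P ++ [b]).Chain' (fun a b => h a = t b) := by
          refine List.isChain_append.2 ?_
          refine ⟨hch, List.isChain_singleton b, ?_⟩
          intro x hx y hy
          simp only [List.head?_cons, Option.mem_def, Option.some.injEq] at hy
          rw [List.getLast?_eq_getLast hne, Option.mem_def, Option.some.injEq] at hx
          subst hx; subst hy
          exact hb.symm
        have hsub' : ∀ a ∈ P ++ [b], a ∈ S := by
          intro a ha
          rcases List.mem_append.1 ha with ha | ha
          · exact hsub a ha
          · simp only [List.mem_singleton] at ha; exact ha ▸ hbS
        have hhead' : t ((P ++ [b]).head hne') = v₀ := by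
          rwa [List.head_append_of_ne_nil hne]
        have hcard' : S.card ≤ (P ++ [b]).length + m := by
          simp only [List.length_append, List.length_singleton]; omega
        exact ih (P ++ [b]) hne' hnd' hch' hsub' hhead' hcard'
      · -- same maximality argument; reuse by applying zero case with fuel 0? card may not hold.
        -- Instead: the maximality argument doesn't need card bound. Redo:
        refine ⟨P, hne, hnd, hch, hsub, hhead, ?_⟩
        by_contra hu
        push_neg at hex
        have hcount := trail_count t h P hch hne (h (P.getLast hne))
        rw [hhead, if_neg (fun hh : v₀ = h (P.getLast hne) => hu hh.symm), if_pos rfl] at hcount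
        set u := h (P.getLast hne) with hudef
        have e1 : P.countP (fun a => decide (t a = u)) =
            (P.toFinset.filter (fun a => t a = u)).card := by
          rw [countP_eq_card _ hnd]; simp
        have e2 : P.countP (fun a => decide (h a = u)) =
            (P.toFinset.filter (fun a => h a = u)).card := by
          rw [countP_eq_card _ hnd]; simp
        have s1 : S.filter (fun a => t a = u) ⊆ P.toFinset.filter (fun a => t a = u) := by
          intro a ha
          simp only [Finset.mem_filter] at ha ⊢
          refine ⟨List.mem_toFinset.2 ?_, ha.2⟩
          by_contra hnotP
          exact hex a ha.1 hnotP ha.2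
        have s2 : P.toFinset.filter (fun a => h a = u) ⊆ S.filter (fun a => h a = u) := by
          intro a ha
          simp only [Finset.mem_filter, List.mem_toFinset] at ha ⊢
          exact ⟨hsub a ha.1, ha.2⟩
        have c1 := Finset.card_le_card s1
        have c2 := Finset.card_le_card s2
        have hb2 := hbal u
        rw [e1, e2] at hcount
        omega

def ClosedTrail (L : List α) : Prop :=
  L.Nodup ∧ L.Chain' (fun a b => h a = t b) ∧ ∀ x ∈ L.head?, ∀ y ∈ L.getLast?, h y = t x

lemma rotate_closed {X Y : List α} (hct : ClosedTrail t h (X ++ Y)) :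
    ClosedTrail t h (Y ++ X) := by
  obtain ⟨hnd, hch, hcl⟩ := hct
  rcases eq_or_ne X [] with rfl | hX
  · simpa using ⟨hnd, hch, hcl⟩
  rcases eq_or_ne Y [] with rfl | hY
  · simp only [List.append_nil] at hnd hch hcl
    simpa using ⟨hnd, hch, hcl⟩
  replace hch := List.isChain_append.1 hch
  obtain ⟨hchX, hchY, hlink⟩ := hch
  refine ⟨List.perm_append_comm.nodup hnd, ?_, ?_⟩
  · refine List.isChain_append.2 ?_
    refine ⟨hchY, hchX, ?_⟩
    intro x hx y hy
    rw [List.getLast?_eq_getLast hY, Option.mem_def, Option.some.injEq] at hx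
    rw [List.head?_eq_head hX, Option.mem_def, Option.some.injEq] at hy
    subst hx; subst hy
    have := hcl ((X ++ Y).head (by simp [hX])) (by rw [List.head?_eq_head]; rfl)
      ((X ++ Y).getLast (by simp [hX])) (by rw [List.getLast?_eq_getLast]; rfl)
    rwa [List.head_append_of_ne_nil hX, List.getLast_append_of_ne_nil _ hY] at this
  · intro x hx y hy
    have hne : Y ++ X ≠ [] := by simp [hX]
    rw [List.head?_eq_head hne, Option.mem_def, Option.some.injEq] at hx
    rw [List.getLast?_eq_getLast hne, Option.mem_def, Option.some.injEq] at hy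
    subst hx; subst hy
    rw [List.head_append_of_ne_nil hY, List.getLast_append_of_ne_nil _ hX]
    exact hlink _ (List.getLast_mem_getLast? hX) _ (by rw [List.head?_eq_head hY]; rfl)

lemma succ_in_closed {L : List α} (hct : ClosedTrail t h L) {τ : α} (hτ : τ ∈ L) :
    ∃ ρ ∈ L, t ρ = h τ := by
  obtain ⟨hnd, hch, hcl⟩ := hct
  have hne : L ≠ [] := List.ne_nil_of_mem hτ
  obtain ⟨i, hi, hgi⟩ := List.getElem_of_mem hτ
  by_cases hlast : i + 1 < L.length
  · refine ⟨L[i + 1], List.getElem_mem _, ?_⟩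
    have := List.isChain_iff_getElem.1 hch i (by omega)
    rw [hgi] at this
    exact this.symm
  · -- τ is the last element
    have : i = L.length - 1 := by omega
    have hτlast : L.getLast hne = τ := by
      rw [List.getLast_eq_getElem]
      subst this; exact hgi
    refine ⟨L.head hne, List.head_mem hne, ?_⟩
    have := hcl (L.head hne) (by rw [List.head?_eq_head]; rfl)
      (L.getLast hne) (by rw [List.getLast?_eq_getLast]; rfl)
    rw [hτlast] at this
    exact this.symm

def Adj (a b : α) : Prop := t a = t b ∨ t a = h b ∨ h a = t b ∨ h a = h b

lemma boundary {T : List α} {a₀ b₀ : α} (ha₀ : a₀ ∈ T) (hb₀ : b₀ ∉ T)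
    (hr : Relation.ReflTransGen (Adj t h) b₀ a₀) :
    ∃ b τ, b ∉ T ∧ τ ∈ T ∧ Adj t h b τ := by
  induction hr using Relation.ReflTransGen.head_induction_on with
  | refl => exact absurd ha₀ hb₀
  | head hadj hrtg ih =>
      rename_i x c
      by_cases hc : c ∈ T
      · exact ⟨x, c, hb₀, hc, hadj⟩
      · exact ih hc

lemma compl_balance
    (hbal : ∀ v, (Finset.univ.filter fun a => t a = v).card
      = (Finset.univ.filter fun a => h a = v).card)
    {L : List α} (hct : ClosedTrail t h L) (v : V) :
    ((Finset.univ.filter fun a : α => a ∉ L).filter fun a => t a = v).card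
      = ((Finset.univ.filter fun a : α => a ∉ L).filter fun a => h a = v).card := by
  obtain ⟨hnd, hch, hcl⟩ := hct
  have key : ∀ f : α → V,
      ((Finset.univ.filter fun a : α => a ∉ L).filter fun a => f a = v).card
        + L.countP (fun a => decide (f a = v))
      = (Finset.univ.filter fun a : α => f a = v).card := by
    intro f
    have hdis : Disjoint (L.toFinset.filter fun a => f a = v)
        ((Finset.univ.filter fun a : α => a ∉ L).filter fun a => f a = v) := by
      rw [Finset.disjoint_left]
      intro a ha hb
      simp only [Finset.mem_filter, List.mem_toFinset, Finset.mem_univ, true_and] at ha hb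
      tauto
    have hun : (L.toFinset.filter fun a => f a = v)
        ∪ ((Finset.univ.filter fun a : α => a ∉ L).filter fun a => f a = v)
        = Finset.univ.filter fun a : α => f a = v := by
      ext a
      simp only [Finset.mem_union, Finset.mem_filter, List.mem_toFinset, Finset.mem_univ,
        true_and]
      tauto
    have hcard := Finset.card_union_of_disjoint hdis
    rw [hun] at hcard
    have e3 : L.countP (fun a => decide (f a = v))
        = (L.toFinset.filter fun a => f a = v).card := by
      rw [countP_eq_card _ hnd]; simp
    omega
  have k1 := key t
  have k2 := key h
  have := closed_count t h L hch hcl v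
  have := hbal v
  omega

lemma extend_closed
    (hbal : ∀ v, (Finset.univ.filter fun a => t a = v).card
      = (Finset.univ.filter fun a => h a = v).card)
    (hconn : ∀ a b : α, Relation.ReflTransGen (Adj t h) a b)
    {L : List α} (hct : ClosedTrail t h L) {b₀ : α} (hb₀ : b₀ ∉ L) :
    ∃ L', ClosedTrail t h L' ∧ L.length < L'.length := by
  classical
  set S : Finset α := Finset.univ.filter (fun a => a ∉ L) with hSdef
  have hSbal : ∀ v, (S.filter fun a => t a = v).card = (S.filter fun a => h a = v).card :=
    compl_balance t h hbal hct
  have hmemS : ∀ a, a ∈ S ↔ a ∉ L := by intro a; simp [hSdef]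
  -- get a starting vertex v with an S-arc out of it and (if L nonempty) an L-arc with tail v
  rcases eq_or_ne L [] with rfl | hLne
  · -- L empty : just take a loop from t b₀
    have hb₀S : b₀ ∈ S := (hmemS b₀).2 (by simp)
    obtain ⟨C, hCne, hCnd, hCch, hCsub, hChead, hClast⟩ :=
      grow t h S hSbal (t b₀) S.card [b₀] (by simp) (by simp) (List.isChain_singleton _)
        (by simpa using hb₀S) (by simp) (by simp)
    refine ⟨C, ⟨hCnd, hCch, ?_⟩, by simpa using List.length_pos_iff.2 hCne⟩
    intro x hx y hy
    rw [List.head?_eq_head hCne, Option.mem_def, Option.some.injEq] at hx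
    rw [List.getLast?_eq_getLast hCne, Option.mem_def, Option.some.injEq] at hy
    subst hx; subst hy
    rw [hClast, hChead]
  · -- L nonempty
    have ha₀ : L.head hLne ∈ L := List.head_mem hLne
    obtain ⟨b, τ, hbL, hτL, hadj⟩ := boundary t h ha₀ hb₀ (hconn b₀ (L.head hLne))
    have hbS : b ∈ S := (hmemS b).2 hbL
    -- produce v, ρ ∈ L with t ρ = v, and a₁ ∈ S with t a₁ = v
    have hget : ∃ v a₁ ρ, ρ ∈ L ∧ t ρ = v ∧ a₁ ∈ S ∧ t a₁ = v := by
      have hfromS : ∀ v, (∃ c ∈ S, h c = v) → ∃ a₁ ∈ S, t a₁ = v := by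
        intro v ⟨c, hcS, hc⟩
        have : 0 < (S.filter fun a => h a = v).card :=
          Finset.card_pos.2 ⟨c, Finset.mem_filter.2 ⟨hcS, hc⟩⟩
        rw [← hSbal v] at this
        obtain ⟨a₁, ha₁⟩ := Finset.card_pos.1 this
        exact ⟨a₁, (Finset.mem_filter.1 ha₁).1, (Finset.mem_filter.1 ha₁).2⟩
      rcases hadj with hh | hh | hh | hh
      · exact ⟨t τ, b, τ, hτL, rfl, hbS, hh⟩
      · obtain ⟨ρ, hρL, hρ⟩ := succ_in_closed t h hct hτL
        exact ⟨h τ, b, ρ, hρL, hρ, hbS, hh⟩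
      · obtain ⟨a₁, ha₁S, ha₁⟩ := hfromS (t τ) ⟨b, hbS, hh⟩
        exact ⟨t τ, a₁, τ, hτL, rfl, ha₁S, ha₁⟩
      · obtain ⟨ρ, hρL, hρ⟩ := succ_in_closed t h hct hτL
        obtain ⟨a₁, ha₁S, ha₁⟩ := hfromS (h τ) ⟨b, hbS, hh⟩
        exact ⟨h τ, a₁, ρ, hρL, hρ, ha₁S, ha₁⟩
    obtain ⟨v, a₁, ρ, hρL, hρv, ha₁S, ha₁v⟩ := hget
    obtain ⟨C, hCne, hCnd, hCch, hCsub, hChead, hClast⟩ :=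
      grow t h S hSbal v S.card [a₁] (by simp) (by simp) (List.isChain_singleton _)
        (by simpa using ha₁S) (by simpa using ha₁v) (by simp)
    -- rotate L at ρ
    obtain ⟨X, Y, hXY⟩ := List.append_of_mem hρL
    have hrot : ClosedTrail t h ((ρ :: Y) ++ X) := rotate_closed t h (hXY ▸ hct)
    obtain ⟨hRnd, hRch, hRcl⟩ := hrot
    have hRne : (ρ :: Y) ++ X ≠ [] := by simp
    have hRhead : ((ρ :: Y) ++ X).head hRne = ρ := by
      rw [List.head_append_of_ne_nil (by simp)]; rfl
    have hCS : ∀ a ∈ C, a ∉ L := fun a ha => (hmemS a).1 (hCsub a ha)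
    have hmemrot : ∀ a, a ∈ (ρ :: Y) ++ X ↔ a ∈ L := by
      intro a; rw [hXY]; simp only [List.mem_append, List.mem_cons]; tauto
    refine ⟨C ++ ((ρ :: Y) ++ X), ⟨?_, ?_, ?_⟩, ?_⟩
    · rw [List.nodup_append]
      exact ⟨hCnd, hRnd, fun a haC c haR hac => hCS a haC ((hmemrot a).1 (by rw [hac]; exact haR))⟩
    · refine List.isChain_append.2 ?_
      refine ⟨hCch, hRch, ?_⟩
      intro x hx y hy
      rw [List.getLast?_eq_getLast hCne, Option.mem_def, Option.some.injEq] at hx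
      rw [List.head?_eq_head hRne, Option.mem_def, Option.some.injEq] at hy
      subst hx; subst hy
      rw [hClast, hRhead, hρv]
    · intro x hx y hy
      have hne' : C ++ ((ρ :: Y) ++ X) ≠ [] := by simp
      rw [List.head?_eq_head hne', Option.mem_def, Option.some.injEq] at hx
      rw [List.getLast?_eq_getLast hne', Option.mem_def, Option.some.injEq] at hy
      subst hx; subst hy
      rw [List.head_append_of_ne_nil hCne, List.getLast_append_of_ne_nil _ hRne]
      have h1 : h (((ρ :: Y) ++ X).getLast hRne) = t ρ := by
        have := hRcl (((ρ :: Y) ++ X).head hRne) (by rw [List.head?_eq_head]; rfl)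
          (((ρ :: Y) ++ X).getLast hRne) (by rw [List.getLast?_eq_getLast]; rfl)
        rwa [hRhead] at this
      rw [h1, hρv, hChead]
    · have hll : ((ρ :: Y) ++ X).length = L.length := by
        rw [hXY]; simp; omega
      have hCpos : 0 < C.length := List.length_pos_iff.2 hCne
      simp only [List.length_append, List.length_cons] at hll ⊢
      omega

theorem euler_list
    (hbal : ∀ v, (Finset.univ.filter fun a => t a = v).card
      = (Finset.univ.filter fun a => h a = v).card)
    (hconn : ∀ a b : α, Relation.ReflTransGen (Adj t h) a b) :
    ∃ L : List α, ClosedTrail t h L ∧ L.length = Fintype.card α := by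
  have key : ∀ i : ℕ, ∃ L, ClosedTrail t h L ∧ (i ≤ L.length ∨ L.length = Fintype.card α) := by
    intro i
    induction i with
    | zero => exact ⟨[], ⟨List.nodup_nil, List.isChain_nil, by simp⟩, Or.inl (Nat.zero_le _)⟩
    | succ i ih =>
        obtain ⟨L, hct, hlen⟩ := ih
        by_cases hfull : L.length = Fintype.card α
        · exact ⟨L, hct, Or.inr hfull⟩
        · have hlt : L.length < Fintype.card α :=
            lt_of_le_of_ne (hct.1.length_le_card) hfull
          have : ∃ b₀, b₀ ∉ L := by
            by_contra hc
            push_neg at hc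
            have : Finset.univ ⊆ L.toFinset := fun a _ => List.mem_toFinset.2 (hc a)
            have := Finset.card_le_card this
            rw [List.card_toFinset, List.dedup_eq_self.2 hct.1, Finset.card_univ] at this
            omega
          obtain ⟨b₀, hb₀⟩ := this
          obtain ⟨L', hct', hlen'⟩ := extend_closed t h hbal hconn hct hb₀
          have : i ≤ L.length := by
            rcases hlen with hh | hh
            · omega
            · exact absurd hh hfull
          exact ⟨L', hct', Or.inl (by omega)⟩
  obtain ⟨L, hct, hlen⟩ := key (Fintype.card α)
  rcases hlen with hh | hh
  · exact ⟨L, hct, le_antisymm (hct.1.length_le_card) hh⟩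
  · exact ⟨L, hct, hh⟩

theorem euler_zmod (N : ℕ) (hN : 1 < N) (hNcard : N = Fintype.card α)
    (hbal : ∀ v, (Finset.univ.filter fun a => t a = v).card
      = (Finset.univ.filter fun a => h a = v).card)
    (hconn : ∀ a b : α, Relation.ReflTransGen (Adj t h) a b) :
    ∃ e : ZMod N → α, Function.Bijective e ∧ ∀ i, h (e i) = t (e (i + 1)) := by
  haveI : NeZero N := ⟨by omega⟩
  haveI : Fact (1 < N) := ⟨hN⟩
  obtain ⟨L, ⟨hnd, hch, hcl⟩, hlen⟩ := euler_list t h hbal hconn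
  have hNlen : N = L.length := by rw [hlen, hNcard]
  have hLne : L ≠ [] := by
    intro hc; rw [hc] at hNlen; simp at hNlen; omega
  refine ⟨fun i => L.get ⟨ZMod.val i, by rw [← hNlen]; exact ZMod.val_lt i⟩, ?_, ?_⟩
  · rw [Fintype.bijective_iff_injective_and_card]
    constructor
    · intro i j hij
      rw [hnd.get_inj_iff] at hij
      exact ZMod.val_injective N (congrArg Fin.val hij)
    · rw [ZMod.card, hNcard]
  · intro i
    show h (L.get ⟨ZMod.val i, by rw [← hNlen]; exact ZMod.val_lt i⟩)
        = t (L.get ⟨ZMod.val (i + 1), by rw [← hNlen]; exact ZMod.val_lt _⟩)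
    have hvlt : ZMod.val i < N := ZMod.val_lt i
    have hvadd : ZMod.val (i + 1) = (ZMod.val i + 1) % N := by
      rw [ZMod.val_add, ZMod.val_one]
    by_cases hlast : ZMod.val i + 1 < N
    · have hval : ZMod.val (i + 1) = ZMod.val i + 1 := by
        rw [hvadd, Nat.mod_eq_of_lt hlast]
      have hc := List.isChain_iff_getElem.1 hch (ZMod.val i) (by omega)
      simp only [List.get_eq_getElem] at hc ⊢
      simp only [hval]
      exact hc
    · have hv : ZMod.val i = N - 1 := by omega
      have h0 : ZMod.val (i + 1) = 0 := by
        rw [hvadd, hv, Nat.sub_add_cancel (by omega : 1 ≤ N), Nat.mod_self]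
      have key := hcl (L.head hLne) (by rw [List.head?_eq_head]; rfl)
        (L.getLast hLne) (by rw [List.getLast?_eq_getLast]; rfl)
      have hN1 : N - 1 = L.length - 1 := by omega
      simp only [List.get_eq_getElem, h0, hv, hN1]
      have e1 : L[(0:ℕ)]'(by rw [← hNlen]; omega) = L.head hLne := List.getElem_zero _
      have e2 : L[L.length - 1]'(by rw [← hNlen]; omega) = L.getLast hLne :=
        (List.getLast_eq_getElem hLne).symm
      rw [e1, e2]
      exact key

end Euler


section Inst
variable {n k : ℕ}

abbrev Arc (n k : ℕ) := {w : Fin n → Fin k // Function.Injective w}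

def tv (w : Arc n k) : Fin (n-1) → Fin k :=
  fun j => w.val ⟨j.val, by have := j.isLt; omega⟩

def hv (w : Arc n k) : Fin (n-1) → Fin k :=
  fun j => w.val ⟨j.val + 1, by have := j.isLt; omega⟩

def rotIdx (m : ℕ) (i : Fin n) : Fin n :=
  ⟨(i.val + m) % n, Nat.mod_lt _ (Nat.lt_of_le_of_lt (Nat.zero_le _) i.isLt)⟩

lemma rotIdx_injective (m : ℕ) : Function.Injective (rotIdx (n := n) m) := by
  intro i j hij
  have hn : 0 < n := Nat.lt_of_le_of_lt (Nat.zero_le _) i.isLt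
  have h1 : (i.val + m) % n = (j.val + m) % n := congrArg Fin.val hij
  have h2 : i.val % n = j.val % n := Nat.ModEq.add_right_cancel' m h1
  rwa [Nat.mod_eq_of_lt i.isLt, Nat.mod_eq_of_lt j.isLt, ← Fin.ext_iff] at h2

def rotm (m : ℕ) (w : Arc n k) : Arc n k :=
  ⟨w.val ∘ rotIdx m, w.prop.comp (rotIdx_injective m)⟩

lemma rotIdx_rotIdx (m m' : ℕ) (i : Fin n) :
    rotIdx m (rotIdx m' i) = rotIdx (m' + m) i := by
  apply Fin.ext
  simp only [rotIdx, Nat.mod_add_mod]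
  rw [Nat.add_assoc]

lemma rotm_rotm (m m' : ℕ) (w : Arc n k) : rotm m' (rotm m w) = rotm (m' + m) w := by
  apply Subtype.ext
  funext i
  show w.val (rotIdx m (rotIdx m' i)) = w.val (rotIdx (m' + m) i)
  rw [rotIdx_rotIdx]

lemma rotIdx_n (i : Fin n) : rotIdx n i = i := by
  apply Fin.ext
  simp only [rotIdx, Nat.add_mod_right]
  exact Nat.mod_eq_of_lt i.isLt

lemma rotm_n (w : Arc n k) : rotm n w = w := by
  apply Subtype.ext; funext i
  show w.val (rotIdx n i) = w.val i
  rw [rotIdx_n]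

lemma hv_rot (w : Arc n k) : hv w = tv (rotm 1 w) := by
  funext j
  have hj := j.isLt
  have hidx : rotIdx 1 (⟨j.val, by omega⟩ : Fin n) = ⟨j.val + 1, by omega⟩ := by
    apply Fin.ext
    simp only [rotIdx]
    exact Nat.mod_eq_of_lt (by omega)
  show w.val ⟨j.val + 1, _⟩ = w.val (rotIdx 1 ⟨j.val, _⟩)
  rw [hidx]

lemma rotm_cancel1 (hn : 0 < n) (a : Arc n k) : rotm 1 (rotm (n-1) a) = a := by
  rw [rotm_rotm]
  have : 1 + (n - 1) = n := by omega
  rw [this, rotm_n]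

lemma rotm_cancel2 (hn : 0 < n) (a : Arc n k) : rotm (n-1) (rotm 1 a) = a := by
  rw [rotm_rotm]
  have : (n - 1) + 1 = n := by omega
  rw [this, rotm_n]

lemma inst_balance (hn : 0 < n) (v : Fin (n-1) → Fin k) :
    (Finset.univ.filter fun a : Arc n k => tv a = v).card
      = (Finset.univ.filter fun a : Arc n k => hv a = v).card := by
  apply Finset.card_bij' (i := fun a _ => rotm (n-1) a) (j := fun a _ => rotm 1 a)
  · intro a ha
    simp only [Finset.mem_filter, Finset.mem_univ, true_and] at ha ⊢
    rw [← ha, hv_rot, rotm_cancel1 hn]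
  · intro a ha
    simp only [Finset.mem_filter, Finset.mem_univ, true_and] at ha ⊢
    rw [← ha, hv_rot]
  · intro a _
    exact rotm_cancel1 hn a
  · intro a _
    exact rotm_cancel2 hn a

/-- the symmetric step generator -/
def gArc (a b : Arc n k) : Prop := hv a = tv b ∨ hv b = tv a

lemma rtg_rot (a : Arc n k) : Relation.ReflTransGen (gArc) a (rotm 1 a) :=
  Relation.ReflTransGen.single (Or.inl (hv_rot a))

lemma rotIdx_zero (i : Fin n) : rotIdx 0 i = i := by
  apply Fin.ext
  simp only [rotIdx, Nat.add_zero]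
  exact Nat.mod_eq_of_lt i.isLt

lemma rotm_zero (a : Arc n k) : rotm 0 a = a := by
  apply Subtype.ext; funext i
  show a.val (rotIdx 0 i) = a.val i
  rw [rotIdx_zero]

lemma rtg_rotm (m : ℕ) (a : Arc n k) : Relation.ReflTransGen (gArc) a (rotm m a) := by
  induction m with
  | zero => rw [rotm_zero]
  | succ m ih =>
      have : rotm 1 (rotm m a) = rotm (m+1) a := by rw [rotm_rotm, Nat.add_comm]
      exact this ▸ ih.trans (rtg_rot (rotm m a))

def updAt (a : Arc n k) (i : Fin n) (y : Fin k)
    (hy : ∀ j, j ≠ i → a.val j ≠ y) : Arc n k :=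
  ⟨fun p => if p = i then y else a.val p, by
    intro p q hpq
    simp only [] at hpq
    by_cases hp : p = i <;> by_cases hq : q = i
    · rw [hp, hq]
    · rw [if_pos hp, if_neg hq] at hpq
      exact absurd hpq.symm (hy q hq)
    · rw [if_neg hp, if_pos hq] at hpq
      exact absurd hpq (hy p hp)
    · rw [if_neg hp, if_neg hq] at hpq
      exact a.prop hpq⟩

/-- replace the last letter -/
lemma rtg_replaceLast (hn : 0 < n) (a : Arc n k) (y : Fin k)
    (hy : ∀ j : Fin n, j.val ≠ n - 1 → a.val j ≠ y) :
    Relation.ReflTransGen (gArc) a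
      (updAt a ⟨n-1, by omega⟩ y (fun j hj => hy j (fun hc => hj (Fin.ext (by simp [hc]))))) := by
  set lastI : Fin n := ⟨n-1, by omega⟩ with hlastI
  -- middle word b = (y, a_0, ..., a_{n-2})
  have hbinj : Function.Injective (fun i : Fin n =>
      if h0 : i.val = 0 then y else a.val ⟨i.val - 1, by have := i.isLt; omega⟩) := by
    intro p q hpq
    by_cases hp : p.val = 0 <;> by_cases hq : q.val = 0 <;>
      simp only [hp, hq, dif_pos, dif_neg] at hpq
    · apply Fin.ext; omega
    · exfalso
      refine hy ⟨q.val - 1, by have := q.isLt; omega⟩ ?_ ?_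
      · have := q.isLt; simp; omega
      · exact hpq.symm
    · exfalso
      refine hy ⟨p.val - 1, by have := p.isLt; omega⟩ ?_ ?_
      · have := p.isLt; simp; omega
      · exact hpq
    · have := a.prop hpq
      have := congrArg Fin.val this
      apply Fin.ext
      have hp' := p.isLt; have hq' := q.isLt
      simp at this; omega
  set b : Arc n k := ⟨_, hbinj⟩ with hbdef
  have step1 : gArc a b := by
    refine Or.inr ?_
    funext j
    have hj := j.isLt
    show (if h0 : (j.val + 1) = 0 then y else a.val _) = a.val ⟨j.val, by omega⟩
    rw [dif_neg (by omega)]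
    congr 1
  have step2 : gArc b (updAt a lastI y (fun j hj => hy j (fun hc => hj (Fin.ext (by simp [hc, hlastI]))))) := by
    refine Or.inl ?_
    funext j
    have hj := j.isLt
    show (if h0 : (j.val + 1) = 0 then y else a.val _) =
      (if (⟨j.val, by omega⟩ : Fin n) = lastI then y else a.val ⟨j.val, by omega⟩)
    rw [dif_neg (by omega), if_neg (by
      intro hc
      have := congrArg Fin.val hc
      simp [hlastI] at this
      omega)]
    congr 1
  exact (Relation.ReflTransGen.single step1).trans (Relation.ReflTransGen.single step2)

lemma rtg_replaceAt (hn : 0 < n) (a : Arc n k) (i : Fin n) (y : Fin k)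
    (hy : ∀ j, j ≠ i → a.val j ≠ y) :
    Relation.ReflTransGen (gArc) a (updAt a i y hy) := by
  set m : ℕ := i.val + 1 with hmdef
  have him := i.isLt
  have hmn : m ≤ n := by omega
  set a' : Arc n k := rotm m a with ha'def
  have hy' : ∀ j : Fin n, j.val ≠ n - 1 → a'.val j ≠ y := by
    intro j hj
    have hjlt := j.isLt
    show a.val (rotIdx m j) ≠ y
    apply hy
    intro hc
    have hval := congrArg Fin.val hc
    simp only [rotIdx] at hval
    rcases Nat.lt_or_ge (j.val + m) n with hr | hr
    · rw [Nat.mod_eq_of_lt hr] at hval; omega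
    · rw [Nat.mod_eq_sub_mod hr, Nat.mod_eq_of_lt (by omega)] at hval; omega
  have step2 := rtg_replaceLast hn a' y hy'
  set c := updAt a' ⟨n-1, by omega⟩ y _ with hcdef
  have step3 := rtg_rotm (n - m) c
  have hfinal : rotm (n - m) c = updAt a i y hy := by
    apply Subtype.ext
    funext p
    have hplt := p.isLt
    show (if rotIdx (n-m) p = (⟨n-1, by omega⟩ : Fin n) then y
        else a.val (rotIdx m (rotIdx (n-m) p))) = (if p = i then y else a.val p)
    have hcond : rotIdx (n-m) p = (⟨n-1, by omega⟩ : Fin n) ↔ p = i := by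
      rw [Fin.ext_iff, Fin.ext_iff]
      simp only [rotIdx]
      rcases Nat.lt_or_ge (p.val + (n - m)) n with hr | hr
      · rw [Nat.mod_eq_of_lt hr]; omega
      · rw [Nat.mod_eq_sub_mod hr, Nat.mod_eq_of_lt (by omega)]; omega
    have hridx : rotIdx m (rotIdx (n-m) p) = p := by
      rw [rotIdx_rotIdx]
      have : n - m + m = n := by omega
      rw [this, rotIdx_n]
    by_cases hp : p = i
    · rw [if_pos (hcond.2 hp), if_pos hp]
    · rw [if_neg (fun hc => hp (hcond.1 hc)), if_neg hp, hridx]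
  exact ((rtg_rotm m a).trans step2).trans (hfinal ▸ step3)

lemma exists_spare (hk : n < k) (a : Arc n k) : ∃ c : Fin k, ∀ j, a.val j ≠ c := by
  by_contra hc
  push_neg at hc
  have hsurj : Function.Surjective a.val := by
    intro c; obtain ⟨j, hj⟩ := hc c; exact ⟨j, hj⟩
  have := Fintype.card_le_of_surjective a.val hsurj
  simp only [Fintype.card_fin] at this
  omega

lemma rtg_swap (hn : 0 < n) (hk : n < k) (a : Arc n k) (i j : Fin n) (hij : i ≠ j) :
    Relation.ReflTransGen (gArc) a
      ⟨a.val ∘ Equiv.swap i j, a.prop.comp (Equiv.swap i j).injective⟩ := by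
  obtain ⟨c, hc⟩ := exists_spare hk a
  have h1 : ∀ p, p ≠ i → a.val p ≠ c := fun p _ => hc p
  set a1 := updAt a i c h1 with ha1
  have h2 : ∀ p, p ≠ j → a1.val p ≠ a.val i := by
    intro p hp
    show (if p = i then c else a.val p) ≠ a.val i
    by_cases hpi : p = i
    · rw [if_pos hpi]; exact fun hcc => hc i hcc.symm
    · rw [if_neg hpi]; exact fun hcc => hpi (a.prop hcc)
  set a2 := updAt a1 j (a.val i) h2 with ha2
  have h3 : ∀ p, p ≠ i → a2.val p ≠ a.val j := by
    intro p hp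
    show (if p = j then a.val i else a1.val p) ≠ a.val j
    by_cases hpj : p = j
    · rw [if_pos hpj]; exact fun hcc => hij (a.prop hcc)
    · rw [if_neg hpj]
      show (if p = i then c else a.val p) ≠ a.val j
      rw [if_neg hp]
      exact fun hcc => hpj (a.prop hcc)
  set a3 := updAt a2 i (a.val j) h3 with ha3
  have hrtg : Relation.ReflTransGen (gArc) a a3 :=
    ((rtg_replaceAt hn a i c h1).trans (rtg_replaceAt hn a1 j (a.val i) h2)).trans
      (rtg_replaceAt hn a2 i (a.val j) h3)
  have hfinal : a3 = ⟨a.val ∘ Equiv.swap i j, a.prop.comp (Equiv.swap i j).injective⟩ := by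
    apply Subtype.ext
    funext p
    show (if p = i then a.val j else (if p = j then a.val i else (if p = i then c else a.val p)))
        = a.val (Equiv.swap i j p)
    by_cases hpi : p = i
    · rw [if_pos hpi, hpi, Equiv.swap_apply_left]
    · rw [if_neg hpi]
      by_cases hpj : p = j
      · rw [if_pos hpj, hpj, Equiv.swap_apply_right]
      · rw [if_neg hpj, if_neg hpi, Equiv.swap_apply_of_ne_of_ne hpi hpj]
  exact hfinal ▸ hrtg

lemma inst_conn_aux (hn : 0 < n) (hk : n < k) :
    ∀ (m : ℕ) (a b : Arc n k),
      ((Finset.univ.image b.val) \ (Finset.univ.image a.val)).card * (n+1)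
        + (Finset.univ.filter fun p => a.val p ≠ b.val p).card ≤ m →
      Relation.ReflTransGen (gArc) a b := by
  intro m
  induction m with
  | zero =>
      intro a b hμ
      have h2 : (Finset.univ.filter fun p => a.val p ≠ b.val p) = ∅ := by
        rw [← Finset.card_eq_zero]; omega
      have hval : a.val = b.val := by
        funext p
        by_contra hc
        have : p ∈ Finset.univ.filter fun p => a.val p ≠ b.val p :=
          Finset.mem_filter.2 ⟨Finset.mem_univ p, hc⟩
        rw [h2] at this
        exact absurd this (Finset.notMem_empty p)
      exact (Subtype.ext hval : a = b) ▸ Relation.ReflTransGen.refl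
  | succ m ih =>
      intro a b hμ
      by_cases hab : a = b
      · exact hab ▸ Relation.ReflTransGen.refl
      by_cases hr : Finset.univ.image a.val = Finset.univ.image b.val
      · -- phase 2: same letter sets, fix a disagreement by swapping
        have hex : ∃ p, a.val p ≠ b.val p := by
          by_contra hc
          push_neg at hc
          exact hab (Subtype.ext (funext hc))
        obtain ⟨p, hp⟩ := hex
        have hbp : b.val p ∈ Finset.univ.image a.val := by
          rw [hr]; exact Finset.mem_image_of_mem _ (Finset.mem_univ p)
        obtain ⟨q, -, hq⟩ := Finset.mem_image.1 hbp
        have hqp : q ≠ p := fun hc => hp (hc ▸ hq)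
        have hrtg := rtg_swap hn hk a p q (Ne.symm hqp)
        set a' : Arc n k := ⟨a.val ∘ Equiv.swap p q,
          a.prop.comp (Equiv.swap p q).injective⟩ with ha'
        refine hrtg.trans (ih a' b ?_)
        have hA : Finset.univ.image a'.val = Finset.univ.image a.val := by
          ext c
          simp only [Finset.mem_image, Finset.mem_univ, true_and]
          constructor
          · rintro ⟨r, hr'⟩; exact ⟨Equiv.swap p q r, hr'⟩
          · rintro ⟨r, hr'⟩
            refine ⟨Equiv.swap p q r, ?_⟩
            show a.val (Equiv.swap p q (Equiv.swap p q r)) = c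
            rw [Equiv.swap_apply_self]
            exact hr'
        have hsub : (Finset.univ.filter fun r => a'.val r ≠ b.val r)
            ⊆ (Finset.univ.filter fun r => a.val r ≠ b.val r).erase p := by
          intro r hr'
          simp only [Finset.mem_filter, Finset.mem_univ, true_and] at hr'
          rw [Finset.mem_erase]
          constructor
          · intro hc
            apply hr'
            rw [hc]
            show a.val (Equiv.swap p q p) = b.val p
            rw [Equiv.swap_apply_left]
            exact hq
          · simp only [Finset.mem_filter, Finset.mem_univ, true_and]
            by_cases hrq : r = q
            · rw [hrq]
              intro hc
              have : b.val q = b.val p := by rw [← hc, hq]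
              exact hqp (b.prop this)
            · by_cases hrp : r = p
              · rw [hrp]; exact hp
              · intro hc
                apply hr'
                show a.val (Equiv.swap p q r) = b.val r
                rw [Equiv.swap_apply_of_ne_of_ne hrp hrq]
                exact hc
        have hpmem : p ∈ (Finset.univ.filter fun r => a.val r ≠ b.val r) :=
          Finset.mem_filter.2 ⟨Finset.mem_univ p, hp⟩
        have hkey : (Finset.univ.filter fun r => a'.val r ≠ b.val r).card
            < (Finset.univ.filter fun r => a.val r ≠ b.val r).card := by
          have h1 := Finset.card_le_card hsub
          rw [Finset.card_erase_of_mem hpmem] at h1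
          have h2 : 0 < (Finset.univ.filter fun r => a.val r ≠ b.val r).card :=
            Finset.card_pos.2 ⟨p, hpmem⟩
          omega
        rw [hA]
        omega
      · -- phase 1: letter sets differ: swap in a missing letter
        have hca : (Finset.univ.image a.val).card = n := by
          rw [Finset.card_image_of_injective _ a.prop, Finset.card_univ, Fintype.card_fin]
        have hcb : (Finset.univ.image b.val).card = n := by
          rw [Finset.card_image_of_injective _ b.prop, Finset.card_univ, Fintype.card_fin]
        have hBA : ((Finset.univ.image b.val) \ (Finset.univ.image a.val)).Nonempty := by
          rw [Finset.sdiff_nonempty]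
          intro hsubs
          exact hr (Finset.eq_of_subset_of_card_le hsubs (by omega)).symm
        have hAB : ((Finset.univ.image a.val) \ (Finset.univ.image b.val)).Nonempty := by
          rw [Finset.sdiff_nonempty]
          intro hsubs
          exact hr (Finset.eq_of_subset_of_card_le hsubs (by omega))
        obtain ⟨z, hz⟩ := hBA
        obtain ⟨u, hu⟩ := hAB
        rw [Finset.mem_sdiff] at hz hu
        obtain ⟨i, -, hi⟩ := Finset.mem_image.1 hu.1
        have hyz : ∀ j, j ≠ i → a.val j ≠ z := by
          intro j _ hc
          exact hz.2 (Finset.mem_image.2 ⟨j, Finset.mem_univ j, hc⟩)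
        set a' := updAt a i z hyz with ha'
        refine (rtg_replaceAt hn a i z hyz).trans (ih a' b ?_)
        have hC : (Finset.univ.image b.val) \ (Finset.univ.image a'.val)
            = ((Finset.univ.image b.val) \ (Finset.univ.image a.val)).erase z := by
          ext c
          rw [Finset.mem_erase, Finset.mem_sdiff, Finset.mem_sdiff]
          constructor
          · rintro ⟨hcb', hca'⟩
            have hcz : c ≠ z := by
              intro hc
              apply hca'
              refine Finset.mem_image.2 ⟨i, Finset.mem_univ i, ?_⟩
              show (if i = i then z else a.val i) = c
              rw [if_pos rfl, hc]
            refine ⟨hcz, hcb', ?_⟩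
            intro hmem
            obtain ⟨r, -, hr'⟩ := Finset.mem_image.1 hmem
            by_cases hri : r = i
            · have hcu : c = u := by rw [← hr', hri]; exact hi
              rw [hcu] at hcb'
              exact hu.2 hcb'
            · apply hca'
              refine Finset.mem_image.2 ⟨r, Finset.mem_univ r, ?_⟩
              show (if r = i then z else a.val r) = c
              rw [if_neg hri, hr']
          · rintro ⟨hcz, hcb', hca'⟩
            refine ⟨hcb', ?_⟩
            intro hmem
            obtain ⟨r, -, hr'⟩ := Finset.mem_image.1 hmem
            by_cases hri : r = i
            · apply hcz
              rw [← hr', hri]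
              show (if i = i then z else a.val i) = z
              rw [if_pos rfl]
            · apply hca'
              refine Finset.mem_image.2 ⟨r, Finset.mem_univ r, ?_⟩
              rw [← hr']
              show a.val r = (if r = i then z else a.val r)
              rw [if_neg hri]
        have hzmem : z ∈ (Finset.univ.image b.val) \ (Finset.univ.image a.val) :=
          Finset.mem_sdiff.2 hz
        have hfb : (Finset.univ.filter fun p => a'.val p ≠ b.val p).card ≤ n := by
          calc (Finset.univ.filter fun p => a'.val p ≠ b.val p).card
              ≤ Finset.univ.card := Finset.card_filter_le _ _
            _ = n := by rw [Finset.card_univ, Fintype.card_fin]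
        have hpos : 0 < ((Finset.univ.image b.val) \ (Finset.univ.image a.val)).card :=
          Finset.card_pos.2 ⟨z, hzmem⟩
        set d := ((Finset.univ.image b.val) \ (Finset.univ.image a.val)).card with hd
        obtain ⟨e, he⟩ : ∃ e, d = e + 1 := ⟨d - 1, by omega⟩
        rw [hC, Finset.card_erase_of_mem hzmem]
        have hgoal : d - 1 = e := by omega
        rw [hgoal]
        rw [he] at hμ
        have hexp : (e + 1) * (n + 1) = e * (n + 1) + (n + 1) := by ring
        rw [hexp] at hμ
        omega

lemma inst_conn (hn : 0 < n) (hk : n < k) (a b : Arc n k) :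
    Relation.ReflTransGen (gArc) a b :=
  inst_conn_aux hn hk _ a b le_rfl

end Inst

lemma forward_aux (n k : ℕ) (hk : 3 ≤ k) (hn : 1 ≤ n) (N : ℕ)
    (hNdef : N = (Finset.univ.filter
      (fun w : Fin n → Fin k => Function.Injective w)).card)
    (s : ZMod N → Fin k)
    (hs : Set.BijOn (fun i : ZMod N => fun j : Fin n => s (i + ((j : ℕ) : ZMod N)))
      Set.univ ↑(Finset.univ.filter (fun w : Fin n → Fin k => Function.Injective w))) :
    k > n := by
  have h0 := hs.mapsTo (Set.mem_univ (0 : ZMod N))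
  simp only [Finset.mem_coe, Finset.mem_filter, Finset.mem_univ, true_and] at h0
  have hnk : n ≤ k := by
    have := Fintype.card_le_of_injective _ h0
    simpa using this
  by_contra hlt
  have hkeq : k = n := le_antisymm (not_lt.1 hlt) hnk
  have hNval : N = Nat.factorial n := by
    rw [hNdef, ← Fintype.card_subtype,
      Fintype.card_congr (Equiv.subtypeInjectiveEquivEmbedding (Fin n) (Fin k)),
      Fintype.card_embedding_eq, Fintype.card_fin, Fintype.card_fin, hkeq,
      Nat.descFactorial_self]
  have hNgt : n < N := by
    rw [hNval]; exact Nat.lt_factorial_self (by omega)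
  haveI : NeZero N := ⟨by omega⟩
  have hW : ∀ i : ZMod N,
      Function.Injective (fun j : Fin n => s (i + ((j : ℕ) : ZMod N))) := by
    intro i
    have := hs.mapsTo (Set.mem_univ i)
    simp only [Finset.mem_coe, Finset.mem_filter, Finset.mem_univ, true_and] at this
    exact this
  have hWsurj : ∀ i : ZMod N,
      Function.Surjective (fun j : Fin n => s (i + ((j : ℕ) : ZMod N))) := by
    intro i
    exact ((Fintype.bijective_iff_injective_and_card _).2
      ⟨hW i, by simp [hkeq]⟩).surjective
  have key : ∀ i : ZMod N, s (i + (n : ZMod N)) = s i := by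
    intro i
    obtain ⟨j, hj⟩ := hWsurj i (s (i + (n : ZMod N)))
    simp only [] at hj
    rcases Nat.eq_zero_or_pos j.val with hj0 | hjpos
    · rw [← hj, hj0]
      simp
    · exfalso
      have hjlt := j.isLt
      have e1 : (i + 1) + ((j.val - 1 : ℕ) : ZMod N) = i + ((j.val : ℕ) : ZMod N) := by
        rw [Nat.cast_sub hjpos]
        push_cast
        ring
      have e2 : (i + 1) + ((n - 1 : ℕ) : ZMod N) = i + (n : ZMod N) := by
        rw [Nat.cast_sub (by omega : 1 ≤ n)]
        push_cast
        ring
      have hcontr : (⟨j.val - 1, by omega⟩ : Fin n) = ⟨n - 1, by omega⟩ := by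
        apply hW (i + 1)
        show s ((i+1) + ((j.val - 1 : ℕ) : ZMod N)) = s ((i+1) + ((n - 1 : ℕ) : ZMod N))
        rw [e1, e2]
        exact hj
      have := congrArg Fin.val hcontr
      simp only [] at this
      omega
  have hweq : (fun j : Fin n => s (((n : ℕ) : ZMod N) + ((j : ℕ) : ZMod N)))
      = (fun j : Fin n => s ((0 : ZMod N) + ((j : ℕ) : ZMod N))) := by
    funext j
    rw [zero_add, add_comm, key]
  have hcast := hs.injOn (Set.mem_univ ((n : ℕ) : ZMod N)) (Set.mem_univ 0) hweq
  rw [ZMod.natCast_eq_zero_iff] at hcast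
  have := Nat.le_of_dvd (by omega) hcast
  omega


/-- A U-cycle for a finite set `S` of `n`-letter words over the alphabet `Fin k`. -/
def IsUCycle {n k : ℕ} (S : Finset (Fin n → Fin k)) (s : ZMod S.card → Fin k) : Prop :=
  Set.BijOn (fun i : ZMod S.card => fun j : Fin n => s (i + ((j : ℕ) : ZMod S.card)))
    Set.univ ↑S

/-- Jackson's theorem: for `k ≥ 3` and `n ≥ 1`, a U-cycle for the injective `n`-letter
words over a `k`-letter alphabet exists if and only if `k > n`. -/
theorem exists_ucycle_injective_iff (n k : ℕ) (hk : 3 ≤ k) (hn : 1 ≤ n) :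
    (∃ s : ZMod (Finset.univ.filter
        (fun w : Fin n → Fin k => Function.Injective w)).card → Fin k,
      IsUCycle (Finset.univ.filter (fun w : Fin n → Fin k => Function.Injective w)) s) ↔
    k > n := by
  constructor
  · rintro ⟨s, hs⟩
    exact forward_aux n k hk hn _ rfl s hs
  · intro hkgt
    have hn0 : 0 < n := hn
    set N := (Finset.univ.filter
      (fun w : Fin n → Fin k => Function.Injective w)).card with hNdef
    have hNcard : N = Fintype.card (Arc n k) := by
      rw [hNdef, Fintype.card_subtype]
    have hN1 : 1 < N := by
      have hinj1 : Function.Injective (fun j : Fin n => (⟨j.val, lt_trans j.isLt hkgt⟩ : Fin k)) := by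
        intro p q hpq
        exact Fin.ext (by simpa using congrArg Fin.val hpq)
      have hinj2 : Function.Injective (fun j : Fin n =>
          if j.val = 0 then (⟨n, hkgt⟩ : Fin k) else ⟨j.val, lt_trans j.isLt hkgt⟩) := by
        intro p q hpq
        simp only [] at hpq
        by_cases hp : p.val = 0 <;> by_cases hq : q.val = 0
        · exact Fin.ext (by omega)
        · rw [if_pos hp, if_neg hq] at hpq
          have := congrArg Fin.val hpq
          simp only [] at this
          have := q.isLt
          omega
        · rw [if_neg hp, if_pos hq] at hpq
          have := congrArg Fin.val hpq
          simp only [] at this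
          have := p.isLt
          omega
        · rw [if_neg hp, if_neg hq] at hpq
          have := congrArg Fin.val hpq
          simp only [] at this
          exact Fin.ext (by omega)
      have hne : (⟨_, hinj1⟩ : Arc n k) ≠ ⟨_, hinj2⟩ := by
        intro hc
        have := congrArg (fun w : Arc n k => (w.val ⟨0, hn0⟩).val) hc
        simp at this
        omega
      rw [hNcard]
      exact Fintype.one_lt_card_iff.2 ⟨_, _, hne⟩
    haveI : NeZero N := ⟨by omega⟩
    have hconn : ∀ a b : Arc n k, Relation.ReflTransGen (Adj tv hv) a b := by
      intro a b
      refine Relation.ReflTransGen.mono ?_ _ _ (inst_conn hn0 hkgt a b)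
      intro x y hxy
      rcases hxy with hh | hh
      · exact Or.inr (Or.inr (Or.inl hh))
      · exact Or.inr (Or.inl hh.symm)
    obtain ⟨e, hebij, hestep⟩ :=
      euler_zmod tv hv N hN1 hNcard (fun v => inst_balance hn0 v) hconn
    refine ⟨fun i => (e i).val ⟨0, hn0⟩, ?_⟩
    unfold IsUCycle
    have hwin : ∀ (m : ℕ) (hm : m < n) (i : ZMod N),
        (e i).val ⟨m, hm⟩ = (e (i + (m : ZMod N))).val ⟨0, hn0⟩ := by
      intro m
      induction m with
      | zero =>
          intro hm i
          simp only [Nat.cast_zero, add_zero]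
      | succ m ihm =>
          intro hm i
          have h1 : (e i).val ⟨m + 1, hm⟩ = hv (e i) ⟨m, by omega⟩ := rfl
          rw [h1, hestep i]
          have h3 : tv (e (i + 1)) ⟨m, by omega⟩ = (e (i + 1)).val ⟨m, by omega⟩ := rfl
          rw [h3, ihm (by omega) (i + 1)]
          have harg : i + 1 + (m : ZMod N) = i + ((m + 1 : ℕ) : ZMod N) := by
            push_cast
            ring
          rw [harg]
    have hfun : (fun i : ZMod N => fun j : Fin n =>
          (fun i : ZMod N => (e i).val ⟨0, hn0⟩) (i + ((j : ℕ) : ZMod N)))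
        = fun i : ZMod N => (e i).val := by
      funext i j
      show (e (i + ((j : ℕ) : ZMod N))).val ⟨0, hn0⟩ = (e i).val j
      first
        | (rw [← hwin j.val j.isLt i]; exact congrArg _ (Fin.eta j j.isLt))
        | rw [← hwin j.val j.isLt i]
    have hbij : Set.BijOn (fun i : ZMod N => (e i).val) Set.univ
        ↑(Finset.univ.filter (fun w : Fin n → Fin k => Function.Injective w)) := by
      refine ⟨?_, ?_, ?_⟩
      · intro i _
        simp only [Finset.mem_coe, Finset.mem_filter, Finset.mem_univ, true_and]
        exact (e i).prop
      · intro i _ j _ hij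
        exact hebij.injective (Subtype.ext hij)
      · intro w hw
        simp only [Finset.mem_coe, Finset.mem_filter, Finset.mem_univ, true_and] at hw
        obtain ⟨i, hi⟩ := hebij.surjective ⟨w, hw⟩
        exact ⟨i, Set.mem_univ i, congrArg Subtype.val hi⟩
    exact hfun ▸ hbij
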